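/- Let d ≥ 1, let X and Y be independent ℝ^d-valued random variables each with density f with respect to Lebesgue measure, let H be an invertible d×d real matrix, let K : ℝ^d → ℝ be bounded, measurable and compactly supported, and let ρ : ℝ^d → ℝ be bounded and measurable. Then for all x, t ∈ ℝ^d, E[K_H(X − x)² · K_H(Y − t)² · ρ(X − Y)²] = |det H|⁻² ∫∫_{ℝ^d×ℝ^d} K(p)² K(q)² ρ(x − t + H(p − q))² f(x + Hp) f(t + Hq) dp dq. -/

import Mathlib

open MeasureTheory ProbabilityTheory Filter
open scoped ENNReal NNReal Topology

noncomputable section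

/-- The rescaled kernel `K_H(v) = |det H|⁻¹ * K (H⁻¹ v)`. -/
def kernelScaled {d : ℕ} (H : Matrix (Fin d) (Fin d) ℝ) (K : (Fin d → ℝ) → ℝ)
    (v : Fin d → ℝ) : ℝ :=
  |H.det|⁻¹ * K (H⁻¹.mulVec v)

private theorem cov_aux {d : ℕ} (H : Matrix (Fin d) (Fin d) ℝ) (hH : H.det ≠ 0)
    (φ : (Fin d → ℝ) → ℝ) (hφ : Measurable φ) (c : Fin d → ℝ) :
    ∫ u, φ u = |H.det| * ∫ p, φ (c + H.mulVec p) := by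
  have hcont : Continuous ⇑(Matrix.toLin' H) :=
    (Matrix.toLin' H).continuous_of_finiteDimensional
  have h1 : ∫ u, φ (c + u) = ∫ u, φ u := integral_add_left_eq_self φ c
  have hmapH : Measure.map (⇑(Matrix.toLin' H)) volume
      = ENNReal.ofReal |H.det|⁻¹ • volume := by
    have := Real.map_matrix_volume_pi_eq_smul_volume_pi hH
    rwa [abs_inv] at this
  have h2 : ∫ w, φ (c + w) ∂(Measure.map (⇑(Matrix.toLin' H)) volume)
      = ∫ p, φ (c + H.mulVec p) := by
    rw [integral_map (f := fun w => φ (c + w)) hcont.measurable.aemeasurable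
      ((hφ.comp (measurable_const_add c)).aestronglyMeasurable)]
    simp [Matrix.toLin'_apply]
  rw [← h1, ← h2, hmapH, integral_smul_measure, ENNReal.toReal_ofReal (by positivity),
    smul_eq_mul, ← mul_assoc, mul_inv_cancel₀ (by positivity : |H.det| ≠ 0), one_mul]

theorem expectation_W3n {d : ℕ} (hd : 1 ≤ d)
    {Ω : Type*} [MeasurableSpace Ω] (μ : Measure Ω) [IsProbabilityMeasure μ]
    (X Y : Ω → (Fin d → ℝ)) (hXmeas : Measurable X) (hYmeas : Measurable Y)
    (hindep : IndepFun X Y μ)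
    (f : (Fin d → ℝ) → ℝ) (hfmeas : Measurable f) (hfnonneg : ∀ y, 0 ≤ f y)
    (hlawX : μ.map X = volume.withDensity (fun y => ENNReal.ofReal (f y)))
    (hlawY : μ.map Y = volume.withDensity (fun y => ENNReal.ofReal (f y)))
    (H : Matrix (Fin d) (Fin d) ℝ) (hH : H.det ≠ 0)
    (K : (Fin d → ℝ) → ℝ) (hKmeas : Measurable K) (hKbd : ∃ C, ∀ u, |K u| ≤ C)
    (hKsupp : HasCompactSupport K)
    (ρ : (Fin d → ℝ) → ℝ) (hρmeas : Measurable ρ) (hρbd : ∃ C, ∀ u, |ρ u| ≤ C)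
    (x t : Fin d → ℝ) :
    ∫ ω, (kernelScaled H K (X ω - x)) ^ 2 * (kernelScaled H K (Y ω - t)) ^ 2 *
        (ρ (X ω - Y ω)) ^ 2 ∂μ =
      (|H.det| ^ 2)⁻¹ *
        ∫ p, ∫ q, (K p) ^ 2 * (K q) ^ 2 * (ρ (x - t + H.mulVec (p - q))) ^ 2 *
          f (x + H.mulVec p) * f (t + H.mulVec q) := by
  obtain ⟨CK, hCK⟩ := hKbd
  obtain ⟨Cρ, hCρ⟩ := hρbd
  have hD : (0:ℝ) < |H.det| := abs_pos.mpr hH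
  have hcontInv : Continuous fun v : Fin d → ℝ => H⁻¹.mulVec v := by
    have := (Matrix.toLin' H⁻¹).continuous_of_finiteDimensional
    exact this
  have hKS : Measurable (kernelScaled H K) := by
    unfold kernelScaled
    exact measurable_const.mul (hKmeas.comp hcontInv.measurable)
  -- the joint integrand
  set g : (Fin d → ℝ) × (Fin d → ℝ) → ℝ := fun z =>
    (kernelScaled H K (z.1 - x)) ^ 2 * (kernelScaled H K (z.2 - t)) ^ 2 *
      (ρ (z.1 - z.2)) ^ 2 with hg
  have hgmeas : Measurable g := by
    apply Measurable.mul
    apply Measurable.mul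
    · exact ((hKS.comp ((measurable_fst).sub measurable_const)).pow_const 2)
    · exact ((hKS.comp ((measurable_snd).sub measurable_const)).pow_const 2)
    · exact ((hρmeas.comp ((measurable_fst).sub measurable_snd)).pow_const 2)
  -- joint law
  have hmap : μ.map (fun ω => (X ω, Y ω)) = (μ.map X).prod (μ.map Y) :=
    (indepFun_iff_map_prod_eq_prod_map_map hXmeas.aemeasurable hYmeas.aemeasurable).mp hindep
  set ν : Measure (Fin d → ℝ) := volume.withDensity (fun y => ENNReal.ofReal (f y)) with hν
  haveI hPX : IsProbabilityMeasure ν := hlawX ▸ Measure.isProbabilityMeasure_map hXmeas.aemeasurable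
  have h1 : ∫ ω, (kernelScaled H K (X ω - x)) ^ 2 * (kernelScaled H K (Y ω - t)) ^ 2 *
        (ρ (X ω - Y ω)) ^ 2 ∂μ = ∫ z, g z ∂(ν.prod ν) := by
    rw [show ν.prod ν = (μ.map X).prod (μ.map Y) by rw [hlawX, hlawY], ← hmap,
      integral_map (hXmeas.prodMk hYmeas).aemeasurable hgmeas.aestronglyMeasurable]
  -- integrability of bounded g on a probability measure
  have hKSbd : ∀ v, |kernelScaled H K v| ≤ |H.det|⁻¹ * CK := by
    intro v
    rw [kernelScaled, abs_mul, abs_of_nonneg (by positivity : (0:ℝ) ≤ |H.det|⁻¹)]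
    exact mul_le_mul_of_nonneg_left (hCK _) (by positivity)
  have hint : Integrable g (ν.prod ν) := by
    refine (integrable_const (((|H.det|⁻¹ * CK) ^ 2) * ((|H.det|⁻¹ * CK) ^ 2) * Cρ ^ 2)).mono'
      hgmeas.aestronglyMeasurable ?_
    filter_upwards with z
    have hCK0 : 0 ≤ CK := le_trans (abs_nonneg _) (hCK 0)
    have hCρ0 : 0 ≤ Cρ := le_trans (abs_nonneg _) (hCρ 0)
    have b1 : |kernelScaled H K (z.1 - x)| ≤ |H.det|⁻¹ * CK := hKSbd _
    have b2 : |kernelScaled H K (z.2 - t)| ≤ |H.det|⁻¹ * CK := hKSbd _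
    have b3 : |ρ (z.1 - z.2)| ≤ Cρ := hCρ _
    have := mul_le_mul (mul_le_mul (pow_le_pow_left₀ (abs_nonneg _) b1 2)
      (pow_le_pow_left₀ (abs_nonneg _) b2 2) (by positivity) (by positivity))
      (pow_le_pow_left₀ (abs_nonneg _) b3 2) (by positivity) (by positivity)
    calc ‖g z‖ = |kernelScaled H K (z.1 - x)| ^ 2 * |kernelScaled H K (z.2 - t)| ^ 2 *
        |ρ (z.1 - z.2)| ^ 2 := by
          rw [hg]; simp [Real.norm_eq_abs, abs_mul, abs_pow]
      _ ≤ _ := this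
  -- Fubini
  have h2 : ∫ z, g z ∂(ν.prod ν) = ∫ u, ∫ v, g (u, v) ∂ν ∂ν := integral_prod g hint
  -- withDensity conversion
  have hwd : ∀ (φ : (Fin d → ℝ) → ℝ), Measurable φ →
      ∫ v, φ v ∂ν = ∫ v, f v * φ v := by
    intro φ hφ
    rw [hν, show (fun y => ENNReal.ofReal (f y)) = fun y => ((f y).toNNReal : ℝ≥0∞) from rfl,
      integral_withDensity_eq_integral_smul hfmeas.real_toNNReal φ]
    congr 1
    ext v
    simp [NNReal.smul_def, Real.coe_toNNReal _ (hfnonneg v)]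
  -- measurability of inner integrals
  have hinner_meas : Measurable fun u => ∫ v, g (u, v) ∂ν :=
    hgmeas.stronglyMeasurable.integral_prod_right'.measurable
  have h3 : ∫ u, ∫ v, g (u, v) ∂ν ∂ν = ∫ u, f u * ∫ v, f v * g (u, v) ∂volume ∂volume := by
    rw [hwd _ hinner_meas]
    congr 1
    ext u
    congr 1
    exact hwd _ (hgmeas.comp (measurable_prodMk_left))
  -- change of variables, outer
  have hφmeas : Measurable fun u => f u * ∫ v, f v * g (u, v) ∂volume := by
    refine hfmeas.mul ?_
    exact ((hfmeas.comp measurable_snd).mul hgmeas).stronglyMeasurable.integral_prod_right'.measurable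
  have h4 : ∫ u, f u * ∫ v, f v * g (u, v) ∂volume ∂volume
      = |H.det| * ∫ p, f (x + H.mulVec p) * ∫ v, f v * g (x + H.mulVec p, v) := by
    exact cov_aux H hH _ hφmeas x
  -- change of variables, inner
  have h5 : ∀ p : Fin d → ℝ, ∫ v, f v * g (x + H.mulVec p, v)
      = |H.det| * ∫ q, f (t + H.mulVec q) * g (x + H.mulVec p, t + H.mulVec q) := by
    intro p
    exact cov_aux H hH _ (hfmeas.mul (hgmeas.comp measurable_prodMk_left)) t
  -- simplify g at shifted points
  have hHinv : ∀ w : Fin d → ℝ, H⁻¹.mulVec (H.mulVec w) = w := by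
    intro w
    rw [Matrix.mulVec_mulVec, Matrix.nonsing_inv_mul H (isUnit_iff_ne_zero.mpr hH), Matrix.one_mulVec]
  have hgval : ∀ p q : Fin d → ℝ, g (x + H.mulVec p, t + H.mulVec q)
      = (|H.det|⁻¹) ^ 2 * (|H.det|⁻¹) ^ 2 *
        ((K p) ^ 2 * (K q) ^ 2 * (ρ (x - t + H.mulVec (p - q))) ^ 2) := by
    intro p q
    have e1 : x + H.mulVec p - x = H.mulVec p := by abel
    have e2 : t + H.mulVec q - t = H.mulVec q := by abel
    have e3 : x + H.mulVec p - (t + H.mulVec q) = x - t + H.mulVec (p - q) := by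
      rw [Matrix.mulVec_sub]; abel
    rw [hg]
    simp only [e1, e2, e3, kernelScaled, hHinv]
    ring
  rw [h1, h2, h3, h4]
  have h6 : ∀ p : Fin d → ℝ,
      f (x + H.mulVec p) * ∫ v, f v * g (x + H.mulVec p, v)
      = |H.det| * ((|H.det|⁻¹) ^ 2 * (|H.det|⁻¹) ^ 2) *
        ∫ q, (K p) ^ 2 * (K q) ^ 2 * (ρ (x - t + H.mulVec (p - q))) ^ 2 *
          f (x + H.mulVec p) * f (t + H.mulVec q) := by
    intro p
    rw [h5 p]
    have hthis : ∀ q : Fin d → ℝ, f (t + H.mulVec q) * g (x + H.mulVec p, t + H.mulVec q)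
        = (|H.det|⁻¹) ^ 2 * (|H.det|⁻¹) ^ 2 *
          ((K p) ^ 2 * (K q) ^ 2 * (ρ (x - t + H.mulVec (p - q))) ^ 2 * f (t + H.mulVec q)) := by
      intro q; rw [hgval p q]; ring
    simp_rw [hthis]
    rw [integral_const_mul]
    have hI : (∫ q, (K p) ^ 2 * (K q) ^ 2 * (ρ (x - t + H.mulVec (p - q))) ^ 2 *
          f (x + H.mulVec p) * f (t + H.mulVec q))
        = f (x + H.mulVec p) * ∫ q, (K p) ^ 2 * (K q) ^ 2 *
            (ρ (x - t + H.mulVec (p - q))) ^ 2 * f (t + H.mulVec q) := by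
      rw [← integral_const_mul]
      congr 1
      ext q
      ring
    rw [hI]
    ring
  simp_rw [h6]
  rw [integral_const_mul, ← mul_assoc]
  congr 1
  have hD' : |H.det| ≠ 0 := ne_of_gt hD
  field_simp
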